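/- With G, C1, C2, U, α_1, α_2 as in the context, where |U| = 1: if α_1 + α_2 ≥ 3, then G has a 3-tuple dominating set and γ×3(G) = 4; and if α_1 = α_2 = 1 and |C1| ≥ 2 and |C2| ≥ 2, then G has a 3-tuple dominating set and γ×3(G) = 5. -/

import Mathlib

open Set

/-- The closed neighborhood `N[v]` of a vertex `v`: `v` together with its neighbors. -/
def closedNbhd {V : Type*} (G : SimpleGraph V) (v : V) : Set V :=
  insert v {w | G.Adj v w}

/-- `D` is a `k`-tuple dominating set of `G`: every vertex has at least `k` members of `D`
in its closed neighborhood. -/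
def IsKTupleDomSet {V : Type*} (G : SimpleGraph V) (k : ℕ) (D : Set V) : Prop :=
  ∀ v : V, k ≤ (closedNbhd G v ∩ D).ncard

/-- `γ×k(G)`: the minimum cardinality of a `k`-tuple dominating set of `G`. -/
noncomputable def gammaTuple {V : Type*} (G : SimpleGraph V) (k : ℕ) : ℕ :=
  sInf {n | ∃ D : Set V, IsKTupleDomSet G k D ∧ D.ncard = n}

/-- A vertex is universal if its closed neighborhood is the whole vertex set. -/
def IsUniversalVertex {V : Type*} (G : SimpleGraph V) (u : V) : Prop :=
  closedNbhd G u = Set.univ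

/-- The non-neighbor set `N̄(v) = V \ N[v]`. -/
def nonNbhd {V : Type*} (G : SimpleGraph V) (v : V) : Set V :=
  (closedNbhd G v)ᶜ

/-- `S` is a stable set of the auxiliary interval graph `H_i`: the non-neighbor sets of the
vertices of `S` are pairwise disjoint. -/
def IsC0PStable {V : Type*} (G : SimpleGraph V) (S : Set V) : Prop :=
  S.Pairwise fun u w => Disjoint (nonNbhd G u) (nonNbhd G w)

lemma nonNbhd_comm {V : Type*} (G : SimpleGraph V) {v w : V} :
    w ∈ nonNbhd G v ↔ v ∈ nonNbhd G w := by
  simp only [nonNbhd, closedNbhd, mem_compl_iff, mem_insert_iff, mem_setOf_eq, not_or]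
  constructor <;> rintro ⟨h1, h2⟩ <;> exact ⟨fun e => h1 e.symm, fun a => h2 a.symm⟩

lemma mem_closedNbhd_of_not_nonNbhd {V : Type*} {G : SimpleGraph V} {v w : V}
    (h : w ∉ nonNbhd G v) : w ∈ closedNbhd G v := not_not.mp h

lemma ncard_ge_three_of {V : Type*} [Fintype V] {s : Set V} {x y z : V}
    (hx : x ∈ s) (hy : y ∈ s) (hz : z ∈ s) (hxy : x ≠ y) (hxz : x ≠ z) (hyz : y ≠ z) :
    3 ≤ s.ncard := by
  have hsub : ({x, y, z} : Set V) ⊆ s := by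
    intro w hw
    rcases hw with rfl | rfl | rfl
    · exact hx
    · exact hy
    · exact hz
  have h3 : ({x, y, z} : Set V).ncard = 3 := by
    rw [Set.ncard_insert_of_notMem (by simp [hxy, hxz]),
      Set.ncard_insert_of_notMem (by simp [hyz]), Set.ncard_singleton]
  calc 3 = ({x, y, z} : Set V).ncard := h3.symm
    _ ≤ s.ncard := Set.ncard_le_ncard hsub (Set.toFinite s)

lemma ncard_inter_add_ncard_compl_inter {V : Type*} [Fintype V] (A D : Set V) :
    (A ∩ D).ncard + (Aᶜ ∩ D).ncard = D.ncard := by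
  have hdisj : Disjoint (A ∩ D) (Aᶜ ∩ D) :=
    Disjoint.mono inter_subset_left inter_subset_left disjoint_compl_right
  rw [← Set.ncard_union_eq hdisj (Set.toFinite _) (Set.toFinite _)]
  congr 1
  ext x
  by_cases hx : x ∈ A <;> simp [hx]

/-- in a C0P-graph whose set `U` of universal vertices has `|U| = 1`:
if `α1 + α2 ≥ 3` then `G` has a `3`-tuple dominating set and `γ×3(G) = 4`; and if
`α1 = α2 = 1`, `|C1| ≥ 2` and `|C2| ≥ 2`, then `G` has a `3`-tuple dominating set and
`γ×3(G) = 5`. -/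
theorem stmt11 {V : Type*} [Fintype V] [LinearOrder V] (G : SimpleGraph V) (C1 C2 U : Set V)
    (hd12 : Disjoint C1 C2) (hd1U : Disjoint C1 U) (hd2U : Disjoint C2 U)
    (hunion : C1 ∪ C2 ∪ U = Set.univ)
    (hne1 : C1.Nonempty) (hne2 : C2.Nonempty)
    (hcl1 : G.IsClique C1) (hcl2 : G.IsClique C2)
    (hU : U = {u : V | IsUniversalVertex G u})
    (hint1 : ∀ v ∈ C1, (nonNbhd G v).Nonempty ∧
      ∀ a ∈ C2, ∀ b ∈ C2, ∀ c ∈ C2, a ≤ b → b ≤ c →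
        a ∈ nonNbhd G v → c ∈ nonNbhd G v → b ∈ nonNbhd G v)
    (hint2 : ∀ v ∈ C2, (nonNbhd G v).Nonempty ∧
      ∀ a ∈ C1, ∀ b ∈ C1, ∀ c ∈ C1, a ≤ b → b ≤ c →
        a ∈ nonNbhd G v → c ∈ nonNbhd G v → b ∈ nonNbhd G v)
    (α1 α2 : ℕ)
    (hα1 : IsGreatest {n | ∃ S : Set V, S ⊆ C1 ∧ IsC0PStable G S ∧ S.ncard = n} α1)
    (hα2 : IsGreatest {n | ∃ S : Set V, S ⊆ C2 ∧ IsC0PStable G S ∧ S.ncard = n} α2)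
    (hUcard : U.ncard = 1) :
    (3 ≤ α1 + α2 → (∃ D : Set V, IsKTupleDomSet G 3 D) ∧ gammaTuple G 3 = 4) ∧
    (α1 = 1 → α2 = 1 → 2 ≤ C1.ncard → 2 ≤ C2.ncard →
      (∃ D : Set V, IsKTupleDomSet G 3 D) ∧ gammaTuple G 3 = 5) := by
  classical
  obtain ⟨u, hu⟩ : ∃ u, U = {u} := Set.ncard_eq_one.mp hUcard
  subst hu
  have huU : u ∈ ({u} : Set V) := rfl
  have huniv : IsUniversalVertex G u := by
    have : u ∈ {x : V | IsUniversalVertex G x} := hU ▸ huU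
    exact this
  -- u is in every closed neighborhood
  have huN : ∀ v : V, u ∈ closedNbhd G v := by
    intro v
    have hv : v ∈ closedNbhd G u := huniv ▸ Set.mem_univ v
    rcases hv with h | h
    · exact h ▸ Set.mem_insert _ _
    · exact Set.mem_insert_iff.mpr (Or.inr h.symm)
  have hNu : ∀ v : V, v ∈ closedNbhd G u := fun v => huniv ▸ Set.mem_univ v
  have huC1 : u ∉ C1 := fun h => Set.disjoint_left.mp hd1U h huU
  have huC2 : u ∉ C2 := fun h => Set.disjoint_left.mp hd2U h huU
  -- clique vertices are in each other's closed neighborhoods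
  have hclN : ∀ (C : Set V), G.IsClique C → ∀ v ∈ C, ∀ a ∈ C, a ∈ closedNbhd G v := by
    intro C hC v hv a ha
    by_cases h : a = v
    · exact h ▸ Set.mem_insert _ _
    · exact Set.mem_insert_iff.mpr (Or.inr (hC hv ha fun e => h e.symm))
  -- every vertex is in C1, C2, or equal to u
  have htri : ∀ v : V, v ∈ C1 ∨ v ∈ C2 ∨ v = u := by
    intro v
    have : v ∈ C1 ∪ C2 ∪ {u} := hunion ▸ Set.mem_univ v
    rcases this with (h | h) | h
    · exact Or.inl h
    · exact Or.inr (Or.inl h)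
    · exact Or.inr (Or.inr h)
  -- non-neighborhoods of C1 vertices lie in C2, and vice versa
  have hsub : ∀ v, (v ∈ C1 → nonNbhd G v ⊆ C2) ∧ (v ∈ C2 → nonNbhd G v ⊆ C1) := by
    intro v
    constructor <;> intro hv w hw
    · rcases htri w with h | h | h
      · exact absurd (hclN C1 hcl1 v hv w h) hw
      · exact h
      · exact absurd (h ▸ huN v) hw
    · rcases htri w with h | h | h
      · exact h
      · exact absurd (hclN C2 hcl2 v hv w h) hw
      · exact absurd (h ▸ huN v) hw
  have hsub1 : ∀ v ∈ C1, nonNbhd G v ⊆ C2 := fun v hv => (hsub v).1 hv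
  have hsub2 : ∀ v ∈ C2, nonNbhd G v ⊆ C1 := fun v hv => (hsub v).2 hv
  -- α1, α2 ≥ 1
  have hα1ge : 1 ≤ α1 := by
    obtain ⟨a, ha⟩ := hne1
    exact hα1.2 ⟨{a}, Set.singleton_subset_iff.mpr ha, Set.pairwise_singleton _ _,
      Set.ncard_singleton a⟩
  have hα2ge : 1 ≤ α2 := by
    obtain ⟨a, ha⟩ := hne2
    exact hα2.2 ⟨{a}, Set.singleton_subset_iff.mpr ha, Set.pairwise_singleton _ _,
      Set.ncard_singleton a⟩
  -- lower bound: any 3-tuple dominating set has at least 4 vertices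
  have lower4 : ∀ D : Set V, IsKTupleDomSet G 3 D → 4 ≤ D.ncard := by
    intro D hD
    by_contra hlt
    push_neg at hlt
    have hDle : D.ncard ≤ 3 := by omega
    have hinterD : ∀ v, closedNbhd G v ∩ D ⊆ D := fun v => inter_subset_right
    have hDsub : ∀ v, D ⊆ closedNbhd G v := by
      intro v
      have h1 : 3 ≤ (closedNbhd G v ∩ D).ncard := hD v
      have heq : closedNbhd G v ∩ D = D :=
        Set.eq_of_subset_of_ncard_le (hinterD v) (by omega) (Set.toFinite D)
      rw [← heq]
      exact inter_subset_left
    have hDU : D ⊆ {u} := by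
      intro d hd
      rcases htri d with h | h | h
      · obtain ⟨w, hw⟩ := (hint1 d h).1
        exact absurd ((nonNbhd_comm G).mp hw) (not_not.mpr (hDsub w hd))
      · obtain ⟨w, hw⟩ := (hint2 d h).1
        exact absurd ((nonNbhd_comm G).mp hw) (not_not.mpr (hDsub w hd))
      · exact h
    have : D.ncard ≤ 1 := hUcard ▸ Set.ncard_le_ncard hDU (Set.toFinite _)
    have := hD u
    have : (closedNbhd G u ∩ D).ncard ≤ D.ncard :=
      Set.ncard_le_ncard (hinterD u) (Set.toFinite D)
    omega
  -- a helper to compute gammaTuple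
  have gset : ∀ (m : ℕ) (D : Set V), IsKTupleDomSet G 3 D → D.ncard = m →
      (∀ D' : Set V, IsKTupleDomSet G 3 D' → m ≤ D'.ncard) → gammaTuple G 3 = m := by
    intro m D hD hcard hmin
    apply le_antisymm
    · exact Nat.sInf_le ⟨D, hD, hcard⟩
    · have hne : {n | ∃ D : Set V, IsKTupleDomSet G 3 D ∧ D.ncard = n}.Nonempty :=
        ⟨m, D, hD, hcard⟩
      apply le_csInf hne
      rintro n ⟨D', hD', rfl⟩
      exact hmin D' hD'
  constructor
  · -- case α1 + α2 ≥ 3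
    intro hαsum
    -- symmetric construction
    have construct : ∀ A B : Set V, G.IsClique A → G.IsClique B → u ∉ A → u ∉ B →
        Disjoint A B → (∀ v : V, v ∈ A ∨ v ∈ B ∨ v = u) →
        ∀ a b c : V, a ∈ A → b ∈ A → c ∈ B → a ≠ b →
        Disjoint (nonNbhd G a) (nonNbhd G b) →
        IsKTupleDomSet G 3 {u, a, b, c} ∧ ({u, a, b, c} : Set V).ncard = 4 := by
      intro A B hclA hclB huA huB hdAB htriAB a b c haA hbA hcB hab hdisj
      have huma : u ≠ a := fun e => huA (e ▸ haA)
      have humb : u ≠ b := fun e => huA (e ▸ hbA)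
      have humc : u ≠ c := fun e => huB (e ▸ hcB)
      have hamc : a ≠ c := fun e => Set.disjoint_left.mp hdAB haA (e ▸ hcB)
      have hbmc : b ≠ c := fun e => Set.disjoint_left.mp hdAB hbA (e ▸ hcB)
      have huD : u ∈ ({u, a, b, c} : Set V) := Set.mem_insert _ _
      have haD : a ∈ ({u, a, b, c} : Set V) := by simp
      have hbD : b ∈ ({u, a, b, c} : Set V) := by simp
      have hcD : c ∈ ({u, a, b, c} : Set V) := by simp
      constructor
      · intro v
        rcases htriAB v with hv | hv | hv
        · exact ncard_ge_three_of ⟨huN v, huD⟩ ⟨hclN A hclA v hv a haA, haD⟩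
            ⟨hclN A hclA v hv b hbA, hbD⟩ huma humb hab
        · have hone : a ∈ closedNbhd G v ∨ b ∈ closedNbhd G v := by
            by_cases ha : a ∈ closedNbhd G v
            · exact Or.inl ha
            · have hva : v ∈ nonNbhd G a := (nonNbhd_comm G).mp ha
              have hvb : v ∉ nonNbhd G b := Set.disjoint_left.mp hdisj hva
              exact Or.inr (mem_closedNbhd_of_not_nonNbhd ((nonNbhd_comm G).not.mpr hvb))
          rcases hone with h | h
          · exact ncard_ge_three_of ⟨huN v, huD⟩ ⟨h, haD⟩
              ⟨hclN B hclB v hv c hcB, hcD⟩ huma humc hamc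
          · exact ncard_ge_three_of ⟨huN v, huD⟩ ⟨h, hbD⟩
              ⟨hclN B hclB v hv c hcB, hcD⟩ humb humc hbmc
        · rw [hv]
          exact ncard_ge_three_of ⟨hNu u, huD⟩ ⟨hNu a, haD⟩ ⟨hNu b, hbD⟩ huma humb hab
      · rw [Set.ncard_insert_of_notMem (by simp [huma, humb, humc]),
          Set.ncard_insert_of_notMem (by simp [hab, hamc]),
          Set.ncard_insert_of_notMem (by simp [hbmc]), Set.ncard_singleton]
    -- get the dominating set of size 4
    have hDex : ∃ D : Set V, IsKTupleDomSet G 3 D ∧ D.ncard = 4 := by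
      have hcase : 2 ≤ α1 ∨ 2 ≤ α2 := by omega
      rcases hcase with h2 | h2
      · obtain ⟨S, hSsub, hSst, hScard⟩ := hα1.1
        obtain ⟨a, haS, b, hbS, hab⟩ :=
          (Set.one_lt_ncard (Set.toFinite S)).mp (by omega)
        obtain ⟨c, hc⟩ := hne2
        exact ⟨{u, a, b, c}, construct C1 C2 hcl1 hcl2 huC1 huC2 hd12 htri a b c
          (hSsub haS) (hSsub hbS) hc hab (hSst haS hbS hab)⟩
      · obtain ⟨S, hSsub, hSst, hScard⟩ := hα2.1
        obtain ⟨a, haS, b, hbS, hab⟩ :=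
          (Set.one_lt_ncard (Set.toFinite S)).mp (by omega)
        obtain ⟨c, hc⟩ := hne1
        have htri' : ∀ v : V, v ∈ C2 ∨ v ∈ C1 ∨ v = u := by
          intro v; rcases htri v with h | h | h
          · exact Or.inr (Or.inl h)
          · exact Or.inl h
          · exact Or.inr (Or.inr h)
        exact ⟨{u, a, b, c}, construct C2 C1 hcl2 hcl1 huC2 huC1 hd12.symm htri' a b c
          (hSsub haS) (hSsub hbS) hc hab (hSst haS hbS hab)⟩
    obtain ⟨D, hD, hDcard⟩ := hDex
    exact ⟨⟨D, hD⟩, gset 4 D hD hDcard lower4⟩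
  · -- case α1 = α2 = 1
    intro h1 h2 hc1 hc2
    -- a dominating set of size 5
    obtain ⟨a1, ha1, a2, ha2, ha12⟩ := (Set.one_lt_ncard (Set.toFinite C1)).mp (by omega)
    obtain ⟨b1, hb1, b2, hb2, hb12⟩ := (Set.one_lt_ncard (Set.toFinite C2)).mp (by omega)
    set D : Set V := {u, a1, a2, b1, b2} with hDdef
    have hua1 : u ≠ a1 := fun e => huC1 (e ▸ ha1)
    have hua2 : u ≠ a2 := fun e => huC1 (e ▸ ha2)
    have hub1 : u ≠ b1 := fun e => huC2 (e ▸ hb1)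
    have hub2 : u ≠ b2 := fun e => huC2 (e ▸ hb2)
    have ha1b1 : a1 ≠ b1 := fun e => Set.disjoint_left.mp hd12 ha1 (e ▸ hb1)
    have ha1b2 : a1 ≠ b2 := fun e => Set.disjoint_left.mp hd12 ha1 (e ▸ hb2)
    have ha2b1 : a2 ≠ b1 := fun e => Set.disjoint_left.mp hd12 ha2 (e ▸ hb1)
    have ha2b2 : a2 ≠ b2 := fun e => Set.disjoint_left.mp hd12 ha2 (e ▸ hb2)
    have huD : u ∈ D := Set.mem_insert _ _
    have ha1D : a1 ∈ D := by simp [hDdef]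
    have ha2D : a2 ∈ D := by simp [hDdef]
    have hb1D : b1 ∈ D := by simp [hDdef]
    have hb2D : b2 ∈ D := by simp [hDdef]
    have hDdom : IsKTupleDomSet G 3 D := by
      intro v
      rcases htri v with hv | hv | hv
      · exact ncard_ge_three_of ⟨huN v, huD⟩ ⟨hclN C1 hcl1 v hv a1 ha1, ha1D⟩
          ⟨hclN C1 hcl1 v hv a2 ha2, ha2D⟩ hua1 hua2 ha12
      · exact ncard_ge_three_of ⟨huN v, huD⟩ ⟨hclN C2 hcl2 v hv b1 hb1, hb1D⟩
          ⟨hclN C2 hcl2 v hv b2 hb2, hb2D⟩ hub1 hub2 hb12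
      · rw [hv]
        exact ncard_ge_three_of ⟨hNu u, huD⟩ ⟨hNu a1, ha1D⟩ ⟨hNu a2, ha2D⟩ hua1 hua2 ha12
    have hDcard : D.ncard = 5 := by
      rw [hDdef, Set.ncard_insert_of_notMem (by simp [hua1, hua2, hub1, hub2]),
        Set.ncard_insert_of_notMem (by simp [ha12, ha1b1, ha1b2]),
        Set.ncard_insert_of_notMem (by simp [ha2b1, ha2b2]),
        Set.ncard_insert_of_notMem (by simp [hb12]), Set.ncard_singleton]
    -- lower bound 5
    have lower5 : ∀ D' : Set V, IsKTupleDomSet G 3 D' → 5 ≤ D'.ncard := by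
      intro D' hD'
      by_contra hlt
      push_neg at hlt
      have h4 : D'.ncard = 4 := le_antisymm (by omega) (lower4 D' hD')
      have hbar : ∀ v, (nonNbhd G v ∩ D').ncard ≤ 1 := by
        intro v
        have hsum := ncard_inter_add_ncard_compl_inter (closedNbhd G v) D'
        have hv3 := hD' v
        have : nonNbhd G v ∩ D' = (closedNbhd G v)ᶜ ∩ D' := rfl
        rw [this]
        omega
      -- at most one D'-vertex in each clique
      have honeclq : ∀ (A : Set V), A ⊆ C1 ∨ A ⊆ C2 →
          (∀ x ∈ A, ∀ y ∈ A, x ≠ y → ¬ Disjoint (nonNbhd G x) (nonNbhd G y)) →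
          (A ∩ D').ncard ≤ 1 := by
        intro A hA hnd
        by_contra hgt
        push_neg at hgt
        obtain ⟨x, hx, y, hy, hxy⟩ := (Set.one_lt_ncard (Set.toFinite _)).mp hgt
        obtain ⟨w, hwx, hwy⟩ := Set.not_disjoint_iff.mp (hnd x hx.1 y hy.1 hxy)
        have hxw : x ∈ nonNbhd G w := (nonNbhd_comm G).mp hwx
        have hyw : y ∈ nonNbhd G w := (nonNbhd_comm G).mp hwy
        have : 2 ≤ (nonNbhd G w ∩ D').ncard := by
          have hsub2 : ({x, y} : Set V) ⊆ nonNbhd G w ∩ D' := by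
            intro z hz
            rcases hz with rfl | rfl
            · exact ⟨hxw, hx.2⟩
            · exact ⟨hyw, hy.2⟩
          calc 2 = ({x, y} : Set V).ncard := by
                rw [Set.ncard_insert_of_notMem (by simp [hxy]), Set.ncard_singleton]
            _ ≤ _ := Set.ncard_le_ncard hsub2 (Set.toFinite _)
        have := hbar w
        omega
      -- α1 = 1 means all pairs in C1 have intersecting non-neighborhoods
      have hpair : ∀ (C : Set V) (α : ℕ),
          IsGreatest {n | ∃ S : Set V, S ⊆ C ∧ IsC0PStable G S ∧ S.ncard = n} α → α = 1 →
          ∀ x ∈ C, ∀ y ∈ C, x ≠ y → ¬ Disjoint (nonNbhd G x) (nonNbhd G y) := by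
        intro C α hα hα1' x hx y hy hxy hdisj
        have hst : IsC0PStable G {x, y} :=
          Set.pairwise_pair.mpr fun _ => ⟨hdisj, hdisj.symm⟩
        have h2card : ({x, y} : Set V).ncard = 2 := by
          rw [Set.ncard_insert_of_notMem (by simp [hxy]), Set.ncard_singleton]
        have : 2 ≤ α := hα.2 ⟨{x, y}, by
          intro z hz; rcases hz with rfl | rfl; exacts [hx, hy], hst, h2card⟩
        omega
      have hC1D : (C1 ∩ D').ncard ≤ 1 :=
        honeclq C1 (Or.inl subset_rfl) (hpair C1 α1 hα1 h1)
      have hC2D : (C2 ∩ D').ncard ≤ 1 :=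
        honeclq C2 (Or.inr subset_rfl) (hpair C2 α2 hα2 h2)
      have hUD : (({u} : Set V) ∩ D').ncard ≤ 1 := by
        have : ({u} : Set V) ∩ D' ⊆ {u} := inter_subset_left
        calc (({u} : Set V) ∩ D').ncard ≤ ({u} : Set V).ncard :=
              Set.ncard_le_ncard this (Set.toFinite _)
          _ = 1 := Set.ncard_singleton u
      have hsplit : D' = (C1 ∩ D') ∪ (C2 ∩ D') ∪ (({u} : Set V) ∩ D') := by
        ext z
        constructor
        · intro hz
          rcases htri z with h | h | h
          · exact Or.inl (Or.inl ⟨h, hz⟩)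
          · exact Or.inl (Or.inr ⟨h, hz⟩)
          · exact Or.inr ⟨h, hz⟩
        · rintro ((⟨_, hz⟩ | ⟨_, hz⟩) | ⟨_, hz⟩) <;> exact hz
      have : D'.ncard ≤ 3 := by
        calc D'.ncard = ((C1 ∩ D') ∪ (C2 ∩ D') ∪ (({u} : Set V) ∩ D')).ncard := by
              rw [← hsplit]
          _ ≤ ((C1 ∩ D') ∪ (C2 ∩ D')).ncard + (({u} : Set V) ∩ D').ncard :=
              Set.ncard_union_le _ _
          _ ≤ (C1 ∩ D').ncard + (C2 ∩ D').ncard + (({u} : Set V) ∩ D').ncard := by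
              have := Set.ncard_union_le (C1 ∩ D') (C2 ∩ D')
              omega
          _ ≤ 3 := by omega
      omega
    exact ⟨⟨D, hDdom⟩, gset 5 D hDdom hDcard lower5⟩
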